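/- Fix an integer K > 2. For r₁ ∈ (0,1), there exists a configuration r ∈ R_K(r₁) with p(r) = 1/2 if and only if 1/K ≤ r₁ < 1/2; that is, S_K := {r₁ ∈ (0,1) : 1/2 ∈ p(R_K(r₁))} equals the interval [1/K, 1/2). -/

import Mathlib

/-- Tangent line inequality for `f x = x/(1-x)` at point `a`. -/
private lemma tangent_line (x a : ℝ) (hx0 : 0 < x) (hx1 : x < 1) (ha0 : 0 < a) (ha1 : a < 1) :
    a / (1 - a) + (x - a) / ((1 - a) ^ 2) ≤ x / (1 - x) := by
  have h1 : (0:ℝ) < 1 - x := by linarith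
  have h2 : (0:ℝ) < 1 - a := by linarith
  have key : x / (1 - x) - (a / (1 - a) + (x - a) / ((1 - a) ^ 2))
      = (x - a) ^ 2 / ((1 - x) * (1 - a) ^ 2) := by
    field_simp
    ring
  have hpos : 0 ≤ (x - a) ^ 2 / ((1 - x) * (1 - a) ^ 2) := by positivity
  linarith

/-- Weak superadditivity of `f x = x/(1-x)`. -/
private lemma superadd (a b : ℝ) (ha : 0 ≤ a) (hb : 0 ≤ b) (hab : a + b < 1) :
    a / (1 - a) + b / (1 - b) ≤ (a + b) / (1 - (a + b)) := by
  have h1 : (0:ℝ) < 1 - a := by linarith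
  have h2 : (0:ℝ) < 1 - b := by linarith
  have h3 : (0:ℝ) < 1 - (a + b) := by linarith
  rw [div_add_div _ _ (ne_of_gt h1) (ne_of_gt h2), div_le_div_iff₀ (by positivity) h3]
  nlinarith [mul_nonneg (mul_nonneg ha hb) (by linarith : (0:ℝ) ≤ 2 - a - b)]

/-- Strict superadditivity of `f x = x/(1-x)`. -/
private lemma superadd_strict (a b : ℝ) (ha : 0 < a) (hb : 0 < b) (hab : a + b < 1) :
    a / (1 - a) + b / (1 - b) < (a + b) / (1 - (a + b)) := by
  have h1 : (0:ℝ) < 1 - a := by linarith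
  have h2 : (0:ℝ) < 1 - b := by linarith
  have h3 : (0:ℝ) < 1 - (a + b) := by linarith
  rw [div_add_div _ _ (ne_of_gt h1) (ne_of_gt h2), div_lt_div_iff₀ (by positivity) h3]
  nlinarith [mul_pos (mul_pos ha hb) (by linarith : (0:ℝ) < 2 - a - b)]

private lemma sum_f_le (s : Finset ℕ) (x : ℕ → ℝ) :
    (∀ i ∈ s, 0 < x i) → (∑ i ∈ s, x i) < 1 →
    ∑ i ∈ s, x i / (1 - x i) ≤ (∑ i ∈ s, x i) / (1 - ∑ i ∈ s, x i) := by
  classical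
  induction s using Finset.induction_on with
  | empty => simp
  | @insert a s ha ih =>
    intro hx hsum
    rw [Finset.sum_insert ha] at hsum ⊢
    rw [Finset.sum_insert ha]
    have hxa := hx a (Finset.mem_insert_self a s)
    have hxs : ∀ i ∈ s, 0 < x i := fun i hi => hx i (Finset.mem_insert_of_mem hi)
    have hsnn : 0 ≤ ∑ i ∈ s, x i := Finset.sum_nonneg fun i hi => (hxs i hi).le
    have hslt : (∑ i ∈ s, x i) < 1 := by linarith
    have h1 := ih hxs hslt
    have h2 := superadd (x a) (∑ i ∈ s, x i) hxa.le hsnn (by linarith)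
    linarith

theorem SK_eq_Ico
    (K : ℕ) (hK : 2 < K) :
    {r1 : ℝ | r1 ∈ Set.Ioo (0 : ℝ) 1 ∧ ∃ r : ℕ → ℝ,
        (∀ k < K, r k ∈ Set.Ioo (0 : ℝ) 1) ∧
        (∑ k ∈ Finset.range K, r k = 1) ∧
        (∀ i j, 1 ≤ i → i ≤ j → j < K → r j ≤ r i) ∧
        r 0 = r1 ∧
        2 / (3 + ∑ k ∈ Finset.Ico 1 K, r k / (1 - r k)) = 1 / 2}
      = Set.Ico (1 / (K : ℝ)) (1 / 2) := by
  have hK3 : (3:ℝ) ≤ (K:ℝ) := by exact_mod_cast hK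
  have hK0 : (0:ℝ) < (K:ℝ) := by linarith
  ext c
  simp only [Set.mem_setOf_eq, Set.mem_Ico, Set.mem_Ioo]
  constructor
  · rintro ⟨⟨hc0, hc1⟩, r, hmem, hsum, hmono, hr0, hp⟩
    -- the inner sum equals 1
    have hterm : ∀ k ∈ Finset.Ico 1 K, 0 < r k / (1 - r k) := by
      intro k hk
      obtain ⟨-, hk2⟩ := Finset.mem_Ico.mp hk
      obtain ⟨h1, h2⟩ := hmem k hk2
      exact div_pos h1 (by linarith)
    have hS0 : 0 ≤ ∑ k ∈ Finset.Ico 1 K, r k / (1 - r k) :=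
      Finset.sum_nonneg fun k hk => (hterm k hk).le
    have hS1 : ∑ k ∈ Finset.Ico 1 K, r k / (1 - r k) = 1 := by
      have h4 := (div_eq_div_iff
        (by linarith : (3:ℝ) + ∑ k ∈ Finset.Ico 1 K, r k / (1 - r k) ≠ 0)
        (by norm_num : (2:ℝ) ≠ 0)).mp hp
      linarith
    have hrest : ∑ k ∈ Finset.Ico 1 K, r k = 1 - c := by
      rw [Finset.range_eq_Ico, Finset.sum_eq_sum_Ico_succ_bot (by omega : 0 < K)] at hsum
      rw [hr0] at hsum
      linarith
    -- lower bound : 1/K ≤ c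
    set a := (1 - c) / ((K:ℝ) - 1) with hadef
    have ha0 : 0 < a := div_pos (by linarith) (by linarith)
    have ha1 : a < 1 := by rw [div_lt_one (by linarith)]; linarith
    have hKa : ((K:ℝ) - 1) * a = 1 - c := by
      have hne : (K:ℝ) - 1 ≠ 0 := by linarith
      rw [hadef]; field_simp
    have htang : ∀ k ∈ Finset.Ico 1 K,
        a / (1 - a) + (r k - a) / ((1 - a) ^ 2) ≤ r k / (1 - r k) := by
      intro k hk
      obtain ⟨-, hk2⟩ := Finset.mem_Ico.mp hk
      obtain ⟨h1, h2⟩ := hmem k hk2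
      exact tangent_line (r k) a h1 h2 ha0 ha1
    have hsumtang := Finset.sum_le_sum htang
    have hcard : (Finset.Ico 1 K).card = K - 1 := Nat.card_Ico 1 K
    have hcast : ((K - 1 : ℕ) : ℝ) = (K:ℝ) - 1 := by
      rw [Nat.cast_sub (by omega)]; norm_num
    have hL : ∑ k ∈ Finset.Ico 1 K, (a / (1 - a) + (r k - a) / ((1 - a) ^ 2))
        = ((K:ℝ) - 1) * (a / (1 - a))
          + ((∑ k ∈ Finset.Ico 1 K, r k) - ((K:ℝ) - 1) * a) / ((1 - a) ^ 2) := by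
      rw [Finset.sum_add_distrib, Finset.sum_const, hcard, ← Finset.sum_div,
        Finset.sum_sub_distrib, Finset.sum_const, hcard, nsmul_eq_mul, nsmul_eq_mul, hcast]
    rw [hL, hrest, hS1, hKa] at hsumtang
    have key : ((K:ℝ) - 1) * (a / (1 - a)) ≤ 1 := by
      have : ((1 - c) - (1 - c)) / ((1 - a) ^ 2) = 0 := by simp
      linarith
    have h1a : (0:ℝ) < 1 - a := by linarith
    rw [← mul_div_assoc] at key
    have h2' : ((K:ℝ) - 1) * a ≤ 1 - a := (div_le_one h1a).mp key
    constructor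
    · rw [div_le_iff₀ hK0]
      -- from 1 - c ≤ 1 - a : a ≤ c, i.e. (1-c)/(K-1) ≤ c
      have hac : a ≤ c := by linarith [hKa]
      rw [hadef, div_le_iff₀ (by linarith : (0:ℝ) < (K:ℝ) - 1)] at hac
      nlinarith
    -- upper bound : c < 1/2
    · have hsplit1 : ∑ k ∈ Finset.Ico 1 K, r k / (1 - r k)
          = r 1 / (1 - r 1) + ∑ k ∈ Finset.Ico 2 K, r k / (1 - r k) :=
        Finset.sum_eq_sum_Ico_succ_bot (by omega) _
      have hsplit2 : ∑ k ∈ Finset.Ico 1 K, r k = r 1 + ∑ k ∈ Finset.Ico 2 K, r k :=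
        Finset.sum_eq_sum_Ico_succ_bot (by omega) _
      obtain ⟨hr1pos, hr1lt⟩ := hmem 1 (by omega)
      have hpos2 : ∀ i ∈ Finset.Ico 2 K, 0 < r i := by
        intro i hi
        obtain ⟨-, hi2⟩ := Finset.mem_Ico.mp hi
        exact (hmem i hi2).1
      have hsum2pos : 0 < ∑ k ∈ Finset.Ico 2 K, r k :=
        Finset.sum_pos hpos2 ⟨2, Finset.mem_Ico.mpr ⟨le_refl 2, hK⟩⟩
      have hsum2lt : (∑ k ∈ Finset.Ico 2 K, r k) < 1 := by
        have : r 1 + ∑ k ∈ Finset.Ico 2 K, r k = 1 - c := by rw [← hsplit2, hrest]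
        linarith
      have hB := sum_f_le (Finset.Ico 2 K) r hpos2 hsum2lt
      have hC := superadd_strict (r 1) (∑ k ∈ Finset.Ico 2 K, r k) hr1pos
        hsum2pos (by rw [← hsplit2, hrest]; linarith)
      have heq : r 1 + ∑ k ∈ Finset.Ico 2 K, r k = 1 - c := by rw [← hsplit2, hrest]
      rw [heq] at hC
      have hfinal : (1:ℝ) < (1 - c) / (1 - (1 - c)) :=
        calc (1:ℝ) = ∑ k ∈ Finset.Ico 1 K, r k / (1 - r k) := hS1.symm
          _ = r 1 / (1 - r 1) + ∑ k ∈ Finset.Ico 2 K, r k / (1 - r k) := hsplit1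
          _ ≤ r 1 / (1 - r 1)
              + (∑ k ∈ Finset.Ico 2 K, r k) / (1 - ∑ k ∈ Finset.Ico 2 K, r k) := by linarith
          _ < (1 - c) / (1 - (1 - c)) := hC
      have : 1 - (1 - c) = c := by ring
      rw [this, lt_div_iff₀ hc0] at hfinal
      linarith
  · rintro ⟨h1, h2⟩
    have hc0 : 0 < c := lt_of_lt_of_le (by positivity) h1
    have hc1 : c < 1 := by linarith
    have hKc : 1 ≤ c * (K:ℝ) := (div_le_iff₀ hK0).mp h1
    set t0 := (1 - c) / ((K:ℝ) - 1) with ht0def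
    have ht00 : 0 < t0 := div_pos (by linarith) (by linarith)
    have ht01 : t0 < 1 := by rw [ht0def, div_lt_one (by linarith)]; linarith
    have hKt0 : ((K:ℝ) - 1) * t0 = 1 - c := by
      have hne : (K:ℝ) - 1 ≠ 0 := by linarith
      rw [ht0def]; field_simp
    set g : ℝ → ℝ := fun t =>
      (1 - c - ((K:ℝ) - 2) * t) / (c + ((K:ℝ) - 2) * t) + ((K:ℝ) - 2) * (t / (1 - t))
      with hgdef
    have hcont : ContinuousOn g (Set.Icc 0 t0) := by
      rw [hgdef]
      apply ContinuousOn.add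
      · apply ContinuousOn.div
        · exact (continuous_const.sub (continuous_const.mul continuous_id)).continuousOn
        · exact (continuous_const.add (continuous_const.mul continuous_id)).continuousOn
        · intro x hx
          have hx0 : 0 ≤ x := hx.1
          have hxm : 0 ≤ ((K:ℝ) - 2) * x := mul_nonneg (by linarith) hx0
          exact ne_of_gt (by linarith)
      · apply ContinuousOn.mul continuousOn_const
        apply ContinuousOn.div continuous_id.continuousOn
          (continuous_const.sub continuous_id).continuousOn
        intro x hx
        have : x < 1 := lt_of_le_of_lt hx.2 ht01
        exact ne_of_gt (by simpa using by linarith : (0:ℝ) < 1 - x)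
    have hg0 : g 0 = (1 - c) / c := by simp [hgdef]
    have hg0gt : 1 < g 0 := by rw [hg0, lt_div_iff₀ hc0]; linarith
    have ht0eq : 1 - c - ((K:ℝ) - 2) * t0 = t0 := by linarith [hKt0]
    have hgt0le : g t0 ≤ 1 := by
      have hden : (0:ℝ) < 1 - t0 := by linarith
      have e1 : c + ((K:ℝ) - 2) * t0 = 1 - t0 := by linarith [ht0eq]
      have ht0c : t0 ≤ c := by
        rw [ht0def, div_le_iff₀ (by linarith : (0:ℝ) < (K:ℝ) - 1)]
        nlinarith
      have : g t0 = (((K:ℝ) - 1) * t0) / (1 - t0) := by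
        rw [hgdef]
        simp only
        rw [ht0eq, e1]
        ring
      rw [this, div_le_one hden]
      linarith [hKt0]
    have hivt : (1:ℝ) ∈ g '' (Set.Icc 0 t0) :=
      intermediate_value_Icc' (le_of_lt ht00) hcont ⟨hgt0le, le_of_lt hg0gt⟩
    obtain ⟨t, ⟨ht0le, htle⟩, hgt⟩ := hivt
    have htpos : 0 < t := by
      rcases lt_or_eq_of_le ht0le with h | h
      · exact h
      · exfalso; rw [← h] at hgt; rw [hgt] at hg0gt; exact lt_irrefl 1 hg0gt
    have ht1 : t < 1 := lt_of_le_of_lt htle ht01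
    have hr1t : t ≤ 1 - c - ((K:ℝ) - 2) * t := by
      have := mul_le_mul_of_nonneg_left htle (by linarith : (0:ℝ) ≤ (K:ℝ) - 1)
      linarith [hKt0]
    have hr1pos : 0 < 1 - c - ((K:ℝ) - 2) * t := lt_of_lt_of_le htpos hr1t
    have hr1lt : 1 - c - ((K:ℝ) - 2) * t < 1 := by
      have := mul_pos (by linarith : (0:ℝ) < (K:ℝ) - 2) htpos
      linarith
    have hgt' : (1 - c - ((K:ℝ) - 2) * t) / (c + ((K:ℝ) - 2) * t)
        + ((K:ℝ) - 2) * (t / (1 - t)) = 1 := hgt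
    refine ⟨⟨hc0, hc1⟩,
      fun k => if k = 0 then c else if k = 1 then 1 - c - ((K:ℝ) - 2) * t else t,
      ?_, ?_, ?_, by simp, ?_⟩
    · intro k hk
      by_cases h0 : k = 0
      · simp only [h0, if_pos rfl]; exact ⟨hc0, hc1⟩
      by_cases h1' : k = 1
      · simp only [h1', if_neg one_ne_zero, if_pos rfl]; exact ⟨hr1pos, hr1lt⟩
      · simp only [if_neg h0, if_neg h1']; exact ⟨htpos, ht1⟩
    · rw [Finset.range_eq_Ico, Finset.sum_eq_sum_Ico_succ_bot (by omega : 0 < K),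
        Finset.sum_eq_sum_Ico_succ_bot (by omega : 1 < K)]
      have hconst : ∑ k ∈ Finset.Ico 2 K,
          (if k = 0 then c else if k = 1 then 1 - c - ((K:ℝ) - 2) * t else t)
          = ((K:ℝ) - 2) * t := by
        have hc' : ∀ k ∈ Finset.Ico 2 K,
            (if k = 0 then c else if k = 1 then 1 - c - ((K:ℝ) - 2) * t else t) = t := by
          intro k hk
          obtain ⟨hk1, -⟩ := Finset.mem_Ico.mp hk
          rw [if_neg (by omega), if_neg (by omega)]
        rw [Finset.sum_congr rfl hc', Finset.sum_const, Nat.card_Ico, nsmul_eq_mul,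
          Nat.cast_sub (by omega)]
        norm_num
      simp only [hconst]
      norm_num
    · intro i j hi hij hjK
      by_cases hi1 : i = 1
      · subst hi1
        by_cases hj1 : j = 1
        · subst hj1; exact le_refl _
        · simp only [if_neg (by omega : j ≠ 0), if_neg hj1, if_neg one_ne_zero, if_pos rfl]
          exact hr1t
      · simp only [if_neg (by omega : i ≠ 0), if_neg hi1, if_neg (by omega : j ≠ 0),
          if_neg (by omega : j ≠ 1)]
        exact le_refl t
    · rw [Finset.sum_eq_sum_Ico_succ_bot (by omega : 1 < K)]
      have hconst2 : ∑ k ∈ Finset.Ico 2 K,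
          (if k = 0 then c else if k = 1 then 1 - c - ((K:ℝ) - 2) * t else t)
            / (1 - if k = 0 then c else if k = 1 then 1 - c - ((K:ℝ) - 2) * t else t)
          = ((K:ℝ) - 2) * (t / (1 - t)) := by
        have hc' : ∀ k ∈ Finset.Ico 2 K,
            (if k = 0 then c else if k = 1 then 1 - c - ((K:ℝ) - 2) * t else t)
              / (1 - if k = 0 then c else if k = 1 then 1 - c - ((K:ℝ) - 2) * t else t)
            = t / (1 - t) := by
          intro k hk
          obtain ⟨hk1, -⟩ := Finset.mem_Ico.mp hk
          rw [if_neg (by omega : k ≠ 0), if_neg (by omega : k ≠ 1)]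
        rw [Finset.sum_congr rfl hc', Finset.sum_const, Nat.card_Ico, nsmul_eq_mul,
          Nat.cast_sub (by omega)]
        norm_num
      simp only [hconst2]
      norm_num
      rw [show (1 : ℝ) - (1 - c - ((K:ℝ) - 2) * t) = c + ((K:ℝ) - 2) * t from by ring]
      rw [hgt']
      norm_num
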